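/- Let d ≥ 1, let Y ⊆ ℝ^d be a production set, let P ⊆ ℝ^d_{++} be a nonempty set of strictly positive price vectors, and suppose the profit function π(p) = sup_{y∈Y} p·y is finite for every p ∈ P. Define Ỹ = {y ∈ ℝ^d : p·y ≤ π(p) for all p ∈ P}. Then Ỹ is closed, convex, satisfies free disposal, contains Y, and satisfies sup_{y∈Ỹ} p·y = π(p) for every p ∈ P. -/

import Mathlib

open scoped RealInnerProductSpace

/-- The strictly positive orthant of `ℝ^d`. -/
def posOrthant (d : ℕ) : Set (EuclideanSpace ℝ (Fin d)) := {p | ∀ i, 0 < p i}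

/-- Free disposal: anything componentwise below a feasible point is feasible. -/
def FreeDisposal {d : ℕ} (Y : Set (EuclideanSpace ℝ (Fin d))) : Prop :=
  ∀ y ∈ Y, ∀ y' : EuclideanSpace ℝ (Fin d), (∀ i, y' i ≤ y i) → y' ∈ Y

/-- Recession cone property: accumulation points of `y^m/‖y^m‖` along a norm-divergent
sequence in `Y` lie in the nonpositive orthant. -/
def RecessionConeProp {d : ℕ} (Y : Set (EuclideanSpace ℝ (Fin d))) : Prop :=
  ∀ ym : ℕ → EuclideanSpace ℝ (Fin d), (∀ m, ym m ∈ Y) →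
    Filter.Tendsto (fun m => ‖ym m‖) Filter.atTop Filter.atTop →
    ∀ z : EuclideanSpace ℝ (Fin d),
      MapClusterPt z Filter.atTop (fun m => ‖ym m‖⁻¹ • ym m) → ∀ i, z i ≤ 0

/-- A production set: nonempty, closed, convex, free disposal, recession cone property. -/
def IsProductionSet {d : ℕ} (Y : Set (EuclideanSpace ℝ (Fin d))) : Prop :=
  Y.Nonempty ∧ IsClosed Y ∧ Convex ℝ Y ∧ FreeDisposal Y ∧ RecessionConeProp Y

/-- Theorem 5.1(i): the outer set `Ỹ` is closed, convex, satisfies free disposal,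
contains `Y`, and has the same profit function as `Y` on `P`. -/
theorem stmt0 (d : ℕ) (hd : 1 ≤ d) (Y : Set (EuclideanSpace ℝ (Fin d)))
    (hY : IsProductionSet Y)
    (P : Set (EuclideanSpace ℝ (Fin d))) (hPne : P.Nonempty) (hPpos : P ⊆ posOrthant d)
    (prof : EuclideanSpace ℝ (Fin d) → ℝ)
    (hprof : ∀ p ∈ P, IsLUB ((fun y => ⟪p, y⟫) '' Y) (prof p)) :
    IsClosed {y : EuclideanSpace ℝ (Fin d) | ∀ p ∈ P, ⟪p, y⟫ ≤ prof p} ∧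
    Convex ℝ {y : EuclideanSpace ℝ (Fin d) | ∀ p ∈ P, ⟪p, y⟫ ≤ prof p} ∧
    FreeDisposal {y : EuclideanSpace ℝ (Fin d) | ∀ p ∈ P, ⟪p, y⟫ ≤ prof p} ∧
    Y ⊆ {y : EuclideanSpace ℝ (Fin d) | ∀ p ∈ P, ⟪p, y⟫ ≤ prof p} ∧
    ∀ p ∈ P,
      IsLUB ((fun y => ⟪p, y⟫) ''
        {y : EuclideanSpace ℝ (Fin d) | ∀ q ∈ P, ⟪q, y⟫ ≤ prof q}) (prof p) := by
  set T : Set (EuclideanSpace ℝ (Fin d)) :=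
    {y | ∀ p ∈ P, ⟪p, y⟫ ≤ prof p} with hT
  have hsub : Y ⊆ T := by
    intro y hy p hp
    exact (hprof p hp).1 ⟨y, hy, rfl⟩
  refine ⟨?_, ?_, ?_, hsub, ?_⟩
  · have : T = ⋂ p ∈ P, {y | ⟪p, y⟫ ≤ prof p} := by
      ext y; simp [hT]
    rw [this]
    exact isClosed_biInter fun p _ =>
      isClosed_le (Continuous.inner continuous_const continuous_id) continuous_const
  · intro x hx y hy a b ha hb hab p hp
    have hxp := hx p hp
    have hyp := hy p hp
    have : ⟪p, a • x + b • y⟫ = a * ⟪p, x⟫ + b * ⟪p, y⟫ := by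
      simp [inner_add_right, real_inner_smul_right, PiLp.inner_apply, RCLike.inner_apply, Finset.mul_sum, mul_left_comm]
      simp only [mul_assoc]
    rw [this]
    calc a * ⟪p, x⟫ + b * ⟪p, y⟫ ≤ a * prof p + b * prof p := by
          gcongr <;> assumption
      _ = prof p := by rw [← add_mul, hab, one_mul]
  · intro y hy y' hle p hp
    refine le_trans ?_ (hy p hp)
    have : ∀ i, p i * y' i ≤ p i * y i := fun i =>
      mul_le_mul_of_nonneg_left (hle i) (hPpos hp i).le
    simpa [PiLp.inner_apply, RCLike.inner_apply, mul_comm] using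
      Finset.sum_le_sum (fun i _ => this i)
  · intro p hp
    constructor
    · intro x ⟨y, hy, hxy⟩
      exact hxy ▸ hy p hp
    · intro b hb
      refine (hprof p hp).2 ?_
      intro x ⟨y, hy, hxy⟩
      exact hb ⟨y, hsub hy, hxy⟩
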